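/- The integral from 0 to π/4 of ln(sin t) dt equals -(π/4)·ln 2 - G/2, and the integral from 0 to π/4 of ln(cos t) dt equals -(π/4)·ln 2 + G/2, where G = ∑_{k=0}^{∞} (-1)^k/(2k+1)^2 is Catalan's constant. -/

import Mathlib

open Real MeasureTheory Set Filter Topology intervalIntegral

-- Step A1: log is integrable on (0,1]
lemma integrableOn_log_Ioc : IntegrableOn Real.log (Set.Ioc 0 1) volume := by
  apply MeasureTheory.integrableOn_Ioc_of_intervalIntegral_norm_bounded_left
    (l := Filter.atTop) (a := fun n : ℕ => 1 / (n + 1)) (I := 1)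
  · intro n
    have h : (0:ℝ) < 1 / (n + 1) := by positivity
    refine (ContinuousOn.integrableOn_Icc ?_).mono_set Ioc_subset_Icc_self
    exact Real.continuousOn_log.mono (fun x hx => by
      have := hx.1; intro h0; rw [h0] at this; simp at this; linarith)
  · exact tendsto_one_div_add_atTop_nhds_zero_nat
  · filter_upwards with n
    set e : ℝ := 1 / (n + 1) with he
    have he0 : (0:ℝ) < e := by positivity
    have he1 : e ≤ 1 := by
      rw [he, div_le_one (by positivity)]; linarith
    have hnorm : ∀ x ∈ Set.Ioc e 1, ‖Real.log x‖ = -Real.log x := by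
      intro x hx
      rw [Real.norm_eq_abs, abs_of_nonpos (Real.log_nonpos (by linarith [hx.1]) hx.2)]
    rw [setIntegral_congr_fun measurableSet_Ioc hnorm]
    rw [← intervalIntegral.integral_of_le (by linarith), intervalIntegral.integral_neg,
      integral_log]
    have h1 : e * Real.log e ≤ 0 :=
      mul_nonpos_of_nonneg_of_nonpos he0.le (Real.log_nonpos he0.le he1)
    simp only [Real.log_one]
    nlinarith

-- log sin integrable on (0,1]
lemma integrableOn_log_sin :
    IntegrableOn (fun t => Real.log (Real.sin t)) (Set.Ioc 0 1) volume := by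
  have hmeas : AEStronglyMeasurable (fun t => Real.log (Real.sin t))
      (volume.restrict (Set.Ioc (0:ℝ) 1)) :=
    (Real.measurable_log.comp Real.continuous_sin.measurable).aestronglyMeasurable
  refine Integrable.mono' (g := fun t => Real.log (π/2) - Real.log t)
    ((integrable_const _).sub (integrableOn_log_Ioc)) hmeas ?_
  rw [ae_restrict_iff' measurableSet_Ioc]
  filter_upwards with t ht
  have hπ := Real.pi_gt_three
  have ht1 : t ≤ π / 2 := by linarith [ht.2]
  have hsin : 2 / π * t ≤ Real.sin t := Real.mul_le_sin ht.1.le ht1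
  have hq : (0:ℝ) < 2 / π * t := mul_pos (by positivity) ht.1
  have hsinpos : 0 < Real.sin t := lt_of_lt_of_le hq hsin
  have hsle : Real.sin t ≤ 1 := Real.sin_le_one t
  rw [Real.norm_eq_abs, abs_of_nonpos (Real.log_nonpos hsinpos.le hsle)]
  have hlog : Real.log (2 / π * t) ≤ Real.log (Real.sin t) :=
    Real.log_le_log hq hsin
  have : Real.log (2 / π * t) = Real.log t - Real.log (π/2) := by
    rw [Real.log_mul (by positivity) (ne_of_gt ht.1), Real.log_div (by norm_num) (by positivity),
      Real.log_div (by positivity) (by norm_num)]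
    ring
  linarith

lemma cont_ii_log_sin {u v : ℝ} (hu : 0 < min u v) (hv : max u v < π) :
    IntervalIntegrable (fun t => Real.log (Real.sin t)) volume u v := by
  apply ContinuousOn.intervalIntegrable
  refine Real.continuousOn_log.comp Real.continuous_sin.continuousOn (fun x hx => ?_)
  obtain ⟨h1, h2⟩ := hx
  exact (Real.sin_pos_of_pos_of_lt_pi (lt_of_lt_of_le hu h1) (lt_of_le_of_lt h2 hv)).ne'

lemma intervalIntegrable_log_sin' {b : ℝ} (hb0 : 0 ≤ b) (hbπ : b < π) :
    IntervalIntegrable (fun t => Real.log (Real.sin t)) volume 0 b := by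
  rcases le_or_gt b 1 with hb1 | hb1
  · rw [intervalIntegrable_iff_integrableOn_Ioc_of_le hb0]
    exact integrableOn_log_sin.mono_set (Set.Ioc_subset_Ioc_right hb1)
  · have h01 : IntervalIntegrable (fun t => Real.log (Real.sin t)) volume 0 1 := by
      rw [intervalIntegrable_iff_integrableOn_Ioc_of_le zero_le_one]
      exact integrableOn_log_sin
    exact h01.trans (cont_ii_log_sin (by rw [min_eq_left hb1.le]; norm_num)
      (by rw [max_eq_right hb1.le]; exact hbπ))

lemma ii_log_sin_upper :
    IntervalIntegrable (fun t => Real.log (Real.sin t)) volume (π/2) π := by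
  have h0 : (0:ℝ) < π := pi_pos
  have h : IntervalIntegrable (fun t => Real.log (Real.sin t)) volume 0 (π/2) :=
    intervalIntegrable_log_sin' (by linarith) (by linarith)
  have h2 := h.comp_sub_left π
  simp only [sub_zero] at h2
  have h3 : (fun x => Real.log (Real.sin (π - x))) = fun x => Real.log (Real.sin x) := by
    funext x; rw [Real.sin_pi_sub]
  rw [h3] at h2
  have he : π - π/2 = π/2 := by ring
  rw [he] at h2
  exact h2.symm

lemma ii_log_cos :
    IntervalIntegrable (fun t => Real.log (Real.cos t)) volume 0 (π/2) := by
  have h0 : (0:ℝ) < π := pi_pos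
  have h : IntervalIntegrable (fun t => Real.log (Real.sin t)) volume 0 (π/2) :=
    intervalIntegrable_log_sin' (by linarith) (by linarith)
  have h2 := h.comp_sub_left (π/2)
  simp only [sub_zero, sub_self] at h2
  have h3 : (fun x => Real.log (Real.sin (π/2 - x))) = fun x => Real.log (Real.cos x) := by
    funext x; rw [Real.sin_pi_div_two_sub]
  rw [h3] at h2
  exact h2.symm

lemma integral_log_sin_pi_div_two :
    ∫ t in (0:ℝ)..(π/2), Real.log (Real.sin t) = -(π/2) * Real.log 2 := by
  have h0 : (0:ℝ) < π := pi_pos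
  set L := ∫ t in (0:ℝ)..(π/2), Real.log (Real.sin t) with hL
  have hiis : IntervalIntegrable (fun t => Real.log (Real.sin t)) volume 0 (π/2) :=
    intervalIntegrable_log_sin' (by linarith) (by linarith)
  -- ∫ log cos = L
  have hcos : ∫ t in (0:ℝ)..(π/2), Real.log (Real.cos t) = L := by
    have := intervalIntegral.integral_comp_sub_left (a := (0:ℝ)) (b := π/2)
      (fun x => Real.log (Real.sin x)) (π/2)
    simp only [sub_zero, sub_self] at this
    rw [hL, ← this]
    refine intervalIntegral.integral_congr (fun t _ => ?_)
    rw [Real.sin_pi_div_two_sub]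
  -- ∫_0^π log sin = 2 L
  have hsplit : ∫ t in (0:ℝ)..π, Real.log (Real.sin t) = 2 * L := by
    rw [← intervalIntegral.integral_add_adjacent_intervals hiis ii_log_sin_upper]
    have hupper : ∫ t in (π/2:ℝ)..π, Real.log (Real.sin t) = L := by
      have := intervalIntegral.integral_comp_sub_left (a := (0:ℝ)) (b := π/2)
        (fun x => Real.log (Real.sin x)) π
      simp only [sub_zero] at this
      have he : π - π/2 = π/2 := by ring
      rw [he] at this
      rw [hL, ← this]
      refine (intervalIntegral.integral_congr (fun t _ => ?_)).symm
      rw [Real.sin_pi_sub]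
    rw [hupper]; ring
  -- ∫_0^{π/2} log sin 2t = L
  have hdouble : ∫ t in (0:ℝ)..(π/2), Real.log (Real.sin (2*t)) = L := by
    have := intervalIntegral.integral_comp_mul_left (a := (0:ℝ)) (b := π/2)
      (fun x => Real.log (Real.sin x)) (c := 2) two_ne_zero
    rw [this]
    norm_num
    rw [show (2:ℝ) * (π/2) = π by ring, hsplit]
    ring
  -- key identity
  have key : 2 * L = L - (π/2) * Real.log 2 := by
    have hmul : ∫ t in (0:ℝ)..(π/2), (Real.log (Real.sin t) + Real.log (Real.cos t)) = 2 * L := by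
      rw [intervalIntegral.integral_add hiis ii_log_cos, hcos]; ring
    have hii2 : IntervalIntegrable (fun t => Real.log (Real.sin (2*t))) volume 0 (π/2) := by
      have h2 : IntervalIntegrable (fun t => Real.log (Real.sin t)) volume 0 π :=
        hiis.trans ii_log_sin_upper
      simpa using h2.comp_mul_left (c := 2) enorm_ne_top enorm_ne_top
    have hae : ∫ t in (0:ℝ)..(π/2), (Real.log (Real.sin t) + Real.log (Real.cos t))
        = ∫ t in (0:ℝ)..(π/2), (Real.log (Real.sin (2*t)) - Real.log 2) := by
      apply intervalIntegral.integral_congr_ae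
      have hne : ∀ᵐ t : ℝ, t ≠ π/2 := by
        rw [ae_iff]
        have h1 : {a : ℝ | ¬a ≠ π / 2} = {π/2} := by ext x; simp
        rw [h1, Real.volume_singleton]
      filter_upwards [hne] with t htne ht
      rw [Set.uIoc_of_le (by linarith : (0:ℝ) ≤ π/2)] at ht
      have ht0 : 0 < t := ht.1
      have ht2 : t < π/2 := lt_of_le_of_ne ht.2 htne
      have hs : 0 < Real.sin t := Real.sin_pos_of_pos_of_lt_pi ht0 (by linarith)
      have hc : 0 < Real.cos t := Real.cos_pos_of_mem_Ioo ⟨by linarith, ht2⟩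
      have hs2 : 0 < Real.sin (2*t) := Real.sin_pos_of_pos_of_lt_pi (by linarith) (by linarith)
      rw [← Real.log_mul hs.ne' hc.ne', ← Real.log_div hs2.ne' two_ne_zero]
      congr 1
      have := Real.sin_two_mul t
      linarith
    rw [hae, intervalIntegral.integral_sub hii2 (intervalIntegrable_const), hdouble,
      intervalIntegral.integral_const, smul_eq_mul] at hmul
    linarith
  linarith

lemma ii_log_cos_quarter :
    IntervalIntegrable (fun t => Real.log (Real.cos t)) volume 0 (π/4) := by
  have h0 : (0:ℝ) < π := pi_pos
  apply ContinuousOn.intervalIntegrable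
  refine Real.continuousOn_log.comp Real.continuous_cos.continuousOn (fun x hx => ?_)
  rw [Set.uIcc_of_le (by linarith : (0:ℝ) ≤ π/4)] at hx
  exact (Real.cos_pos_of_mem_Ioo ⟨by linarith [hx.1], by linarith [hx.2]⟩).ne'

lemma sum_IJ :
    (∫ t in (0:ℝ)..(π/4), Real.log (Real.sin t)) + (∫ t in (0:ℝ)..(π/4), Real.log (Real.cos t))
      = -(π/2) * Real.log 2 := by
  have h0 : (0:ℝ) < π := pi_pos
  have hiis : IntervalIntegrable (fun t => Real.log (Real.sin t)) volume 0 (π/4) :=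
    intervalIntegrable_log_sin' (by linarith) (by linarith)
  have hii2 : IntervalIntegrable (fun t => Real.log (Real.sin (2*t))) volume 0 (π/4) := by
    have h2 : IntervalIntegrable (fun t => Real.log (Real.sin t)) volume 0 (π/2) :=
      intervalIntegrable_log_sin' (by linarith) (by linarith)
    have := h2.comp_mul_left (c := 2) enorm_ne_top enorm_ne_top
    norm_num at this
    convert this using 1
    ring
  rw [← intervalIntegral.integral_add hiis ii_log_cos_quarter]
  have hae : ∫ t in (0:ℝ)..(π/4), (Real.log (Real.sin t) + Real.log (Real.cos t))
      = ∫ t in (0:ℝ)..(π/4), (Real.log (Real.sin (2*t)) - Real.log 2) := by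
    apply intervalIntegral.integral_congr_ae
    filter_upwards with t ht
    rw [Set.uIoc_of_le (by linarith : (0:ℝ) ≤ π/4)] at ht
    have ht0 : 0 < t := ht.1
    have ht2 : t ≤ π/4 := ht.2
    have hs : 0 < Real.sin t := Real.sin_pos_of_pos_of_lt_pi ht0 (by linarith)
    have hc : 0 < Real.cos t := Real.cos_pos_of_mem_Ioo ⟨by linarith, by linarith⟩
    have hs2 : 0 < Real.sin (2*t) := Real.sin_pos_of_pos_of_lt_pi (by linarith) (by linarith)
    rw [← Real.log_mul hs.ne' hc.ne', ← Real.log_div hs2.ne' two_ne_zero]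
    congr 1
    have := Real.sin_two_mul t
    linarith
  rw [hae, intervalIntegral.integral_sub hii2 intervalIntegrable_const,
    intervalIntegral.integral_const, smul_eq_mul]
  have hdouble : ∫ t in (0:ℝ)..(π/4), Real.log (Real.sin (2*t)) = -(π/4) * Real.log 2 := by
    have := intervalIntegral.integral_comp_mul_left (a := (0:ℝ)) (b := π/4)
      (fun x => Real.log (Real.sin x)) (c := 2) two_ne_zero
    rw [this]
    norm_num
    rw [show (2:ℝ) * (π/4) = π/2 by ring, integral_log_sin_pi_div_two]
    ring
  rw [hdouble]
  ring

lemma integrableOn_pow_mul_log (n : ℕ) :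
    IntegrableOn (fun x : ℝ => x^n * Real.log x) (Set.Icc 0 1) volume := by
  rw [integrableOn_Icc_iff_integrableOn_Ioc]
  have hmeas : AEStronglyMeasurable (fun x : ℝ => x^n * Real.log x)
      (volume.restrict (Set.Ioc (0:ℝ) 1)) :=
    ((measurable_id.pow_const n).mul Real.measurable_log).aestronglyMeasurable
  refine Integrable.mono' (g := fun x => ‖Real.log x‖) integrableOn_log_Ioc.norm hmeas ?_
  rw [ae_restrict_iff' measurableSet_Ioc]
  filter_upwards with x hx
  rw [norm_mul]
  have hx1 : ‖x^n‖ ≤ 1 := by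
    rw [Real.norm_eq_abs, abs_pow]
    exact pow_le_one₀ (abs_nonneg x) (abs_le.mpr ⟨by linarith [hx.1], hx.2⟩)
  nlinarith [norm_nonneg (Real.log x), norm_nonneg (x^n)]

lemma integral_pow_mul_log (n : ℕ) :
    ∫ x in (0:ℝ)..1, x^n * Real.log x = -(1/((n:ℝ)+1)^2) := by
  set m : ℝ := (n:ℝ) + 1 with hm
  have hm0 : m ≠ 0 := by positivity
  set F : ℝ → ℝ := fun x => x^(n+1) * Real.log x / m - x^(n+1) / m^2 with hF
  -- FTC on [ε, 1]
  have hFTC : ∀ ε : ℝ, ε ∈ Set.Ioo (0:ℝ) 1 →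
      ∫ x in ε..1, x^n * Real.log x = F 1 - F ε := by
    intro ε hε
    apply intervalIntegral.integral_eq_sub_of_hasDerivAt
    · intro x hx
      rw [Set.uIcc_of_le hε.2.le] at hx
      have hx0 : 0 < x := lt_of_lt_of_le hε.1 hx.1
      have h1 := (hasDerivAt_pow (n+1) x).mul (Real.hasDerivAt_log hx0.ne')
      have h2 := (h1.div_const m).sub ((hasDerivAt_pow (n+1) x).div_const (m^2))
      convert h2 using 1
      · rfl
      have : (↑(n+1) : ℝ) = m := by push_cast [hm]; ring
      rw [Nat.add_sub_cancel, this]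
      field_simp [this]
      ring
    · apply ContinuousOn.intervalIntegrable
      refine ContinuousOn.mul (continuous_pow n).continuousOn
        (Real.continuousOn_log.mono (fun x hx => ?_))
      rw [Set.uIcc_of_le hε.2.le] at hx
      exact (lt_of_lt_of_le hε.1 hx.1).ne'
  -- limits
  have hl : (𝓝[Set.Ioo (0:ℝ) 1] 0).NeBot := by
    rw [← mem_closure_iff_nhdsWithin_neBot, closure_Ioo one_ne_zero.symm]
    exact ⟨le_refl 0, zero_le_one⟩
  have hle : 𝓝[Set.Ioo (0:ℝ) 1] (0:ℝ) ≤ 𝓝[Set.Icc 0 1] 0 :=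
    nhdsWithin_mono _ Set.Ioo_subset_Icc_self
  have hle' : 𝓝[Set.Ioo (0:ℝ) 1] (0:ℝ) ≤ 𝓝[>] 0 :=
    nhdsWithin_mono _ (fun x hx => hx.1)
  -- LHS tendsto
  have hLHS : Tendsto (fun ε => ∫ x in ε..1, x^n * Real.log x) (𝓝[Set.Ioo (0:ℝ) 1] 0)
      (𝓝 (∫ x in (0:ℝ)..1, x^n * Real.log x)) := by
    have hcont := intervalIntegral.continuousOn_primitive_interval_left
      (f := fun x : ℝ => x^n * Real.log x) (μ := volume) (a := 0) (b := 1) ?_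
    · have := (hcont 0 (by rw [Set.uIcc_of_le zero_le_one]; exact ⟨le_refl 0, zero_le_one⟩))
      rw [ContinuousWithinAt] at this
      rw [Set.uIcc_of_le zero_le_one] at this
      exact this.mono_left hle
    · rw [Set.uIcc_of_le zero_le_one]
      exact integrableOn_pow_mul_log n
  -- RHS tendsto
  have hF0 : Tendsto F (𝓝[>] (0:ℝ)) (𝓝 0) := by
    have h1 : Tendsto (fun x : ℝ => x^(n+1) * Real.log x / m) (𝓝[>] (0:ℝ)) (𝓝 0) := by
      have := tendsto_log_mul_rpow_nhdsGT_zero (r := (n:ℝ)+1) (by positivity)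
      have h2 : Tendsto (fun x : ℝ => Real.log x * x ^ ((n:ℝ)+1)) (𝓝[>] (0:ℝ)) (𝓝 0) := this
      have h3 : (fun x : ℝ => x^(n+1) * Real.log x) =ᶠ[𝓝[>] (0:ℝ)]
          (fun x : ℝ => Real.log x * x ^ ((n:ℝ)+1)) := by
        filter_upwards [self_mem_nhdsWithin] with x hx
        rw [← Real.rpow_natCast x (n+1)]
        push_cast
        ring
      have h4 := h2.congr' h3.symm
      simpa using h4.div_const m
    have h2 : Tendsto (fun x : ℝ => x^(n+1) / m^2) (𝓝[>] (0:ℝ)) (𝓝 0) := by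
      have : Tendsto (fun x : ℝ => x^(n+1)) (𝓝 (0:ℝ)) (𝓝 (0^(n+1))) :=
        (continuous_pow (n+1)).tendsto 0
      rw [zero_pow (Nat.succ_ne_zero n)] at this
      simpa using (this.mono_left nhdsWithin_le_nhds).div_const (m^2)
    simpa using h1.sub h2
  have hRHS : Tendsto (fun ε => F 1 - F ε) (𝓝[Set.Ioo (0:ℝ) 1] 0) (𝓝 (F 1 - 0)) :=
    tendsto_const_nhds.sub (hF0.mono_left hle')
  have heq : (fun ε => ∫ x in ε..1, x^n * Real.log x) =ᶠ[𝓝[Set.Ioo (0:ℝ) 1] 0]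
      (fun ε => F 1 - F ε) := by
    filter_upwards [self_mem_nhdsWithin] with ε hε
    exact hFTC ε hε
  have := tendsto_nhds_unique (hLHS.congr' heq) hRHS
  rw [this, hF]
  simp [hm]

lemma summable_aux : Summable (fun k : ℕ => 1/(2*(k:ℝ)+1)^2) := by
  have h1 : Summable (fun n : ℕ => 1/((n:ℝ))^2) := Real.summable_one_div_nat_pow.mpr one_lt_two
  have h2 : Summable (fun k : ℕ => 1/(((k:ℝ))+1)^2) := by
    have := (summable_nat_add_iff (f := fun n : ℕ => 1/((n:ℝ))^2) 1).mpr h1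
    simpa using this
  refine Summable.of_nonneg_of_le (fun k => by positivity) (fun k => ?_) h2
  apply one_div_le_one_div_of_le (by positivity)
  nlinarith [Nat.cast_nonneg (α := ℝ) k]

lemma integral_Ioo_pow_mul_log (n : ℕ) :
    ∫ x in Set.Ioo (0:ℝ) 1, x^n * Real.log x = -(1/((n:ℝ)+1)^2) := by
  rw [← MeasureTheory.integral_Ioc_eq_integral_Ioo, ← intervalIntegral.integral_of_le zero_le_one]
  exact integral_pow_mul_log n

lemma integral_log_div_one_add_sq :
    ∫ x in (0:ℝ)..1, Real.log x / (1 + x^2)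
      = -(∑' k : ℕ, (-1:ℝ)^k / (2*(k:ℝ)+1)^2) := by
  set μ : Measure ℝ := volume.restrict (Set.Ioo 0 1) with hμ
  set f : ℕ → ℝ → ℝ := fun k x => (-1:ℝ)^k * (x^(2*k) * Real.log x) with hf
  have hmeas : ∀ k, AEStronglyMeasurable (f k) μ := fun k =>
    (((measurable_id.pow_const (2*k)).mul Real.measurable_log).const_mul _).aestronglyMeasurable
  have hint : ∀ k, Integrable (f k) μ := by
    intro k
    apply Integrable.const_mul
    exact ((integrableOn_pow_mul_log (2*k)).mono_set Set.Ioo_subset_Icc_self)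
  have hnormval : ∀ k, ∫ x, ‖f k x‖ ∂μ = 1/(2*(k:ℝ)+1)^2 := by
    intro k
    rw [hμ]
    have hcongr : ∀ x ∈ Set.Ioo (0:ℝ) 1, ‖f k x‖ = -(x^(2*k) * Real.log x) := by
      intro x hx
      simp only [hf, norm_mul, norm_pow, norm_neg, norm_one, one_pow, one_mul]
      rw [Real.norm_eq_abs, Real.norm_eq_abs, abs_of_pos hx.1,
        abs_of_nonpos (Real.log_nonpos hx.1.le hx.2.le)]
      ring
    rw [setIntegral_congr_fun measurableSet_Ioo hcongr, MeasureTheory.integral_neg,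
      integral_Ioo_pow_mul_log]
    push_cast
    ring_nf
  have hlint : ∑' k, ∫⁻ x, ‖f k x‖ₑ ∂μ ≠ ⊤ := by
    have heq : ∀ k, ∫⁻ x, ‖f k x‖ₑ ∂μ = ENNReal.ofReal (1/(2*(k:ℝ)+1)^2) := by
      intro k
      rw [← MeasureTheory.ofReal_integral_norm_eq_lintegral_enorm (hint k), hnormval k]
    rw [tsum_congr heq, ← ENNReal.ofReal_tsum_of_nonneg (fun k => by positivity) summable_aux]
    exact ENNReal.ofReal_ne_top
  have key := MeasureTheory.integral_tsum hmeas hlint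
  have hpt : ∀ x ∈ Set.Ioo (0:ℝ) 1, (∑' k, f k x) = Real.log x / (1+x^2) := by
    intro x hx
    have hx2 : ‖-(x^2)‖ < 1 := by
      rw [norm_neg, Real.norm_eq_abs, abs_of_nonneg (sq_nonneg x)]
      nlinarith [hx.1, hx.2]
    have hg := tsum_geometric_of_norm_lt_one hx2
    have hfk : ∀ k, f k x = (-(x^2))^k * Real.log x := by
      intro k
      simp only [hf]
      rw [neg_pow, pow_mul]
      ring
    rw [tsum_congr hfk, tsum_mul_right, hg, sub_neg_eq_add]
    rw [inv_eq_one_div]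
    ring
  calc ∫ x in (0:ℝ)..1, Real.log x / (1 + x^2)
      = ∫ x in Set.Ioo (0:ℝ) 1, Real.log x / (1 + x^2) := by
        rw [intervalIntegral.integral_of_le zero_le_one,
          MeasureTheory.integral_Ioc_eq_integral_Ioo]
    _ = ∫ x, (∑' k, f k x) ∂μ :=
        (setIntegral_congr_fun measurableSet_Ioo (fun x hx => (hpt x hx).symm))
    _ = ∑' k, ∫ x, f k x ∂μ := key
    _ = ∑' k : ℕ, -((-1:ℝ)^k / (2*(k:ℝ)+1)^2) := by
        apply tsum_congr
        intro k
        rw [hf]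
        simp only
        rw [MeasureTheory.integral_const_mul, hμ, integral_Ioo_pow_mul_log]
        push_cast
        ring_nf
    _ = -(∑' k : ℕ, (-1:ℝ)^k / (2*(k:ℝ)+1)^2) := tsum_neg

lemma log_tan_eqOn : ∀ u ∈ Set.Icc (0:ℝ) (π/4),
    Real.log (Real.tan u) = Real.log (Real.sin u) - Real.log (Real.cos u) := by
  intro u hu
  have h0 : (0:ℝ) < π := pi_pos
  rcases eq_or_lt_of_le hu.1 with h | h
  · rw [← h]; simp
  · have hs : 0 < Real.sin u := Real.sin_pos_of_pos_of_lt_pi h (by linarith [hu.2])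
    have hc : 0 < Real.cos u := Real.cos_pos_of_mem_Ioo ⟨by linarith, by linarith [hu.2]⟩
    rw [Real.tan_eq_sin_div_cos, Real.log_div hs.ne' hc.ne']

lemma ii_log_tan : IntervalIntegrable (fun u => Real.log (Real.tan u)) volume 0 (π/4) := by
  have h0 : (0:ℝ) < π := pi_pos
  have h := (intervalIntegrable_log_sin' (by linarith) (by linarith) :
    IntervalIntegrable _ volume 0 (π/4)).sub ii_log_cos_quarter
  rw [intervalIntegrable_iff_integrableOn_Ioc_of_le (by linarith)] at h ⊢
  exact h.congr_fun (fun u hu => (log_tan_eqOn u (Set.Ioc_subset_Icc_self hu)).symm)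
    measurableSet_Ioc

lemma integrableOn_log_div_one_add_sq :
    IntegrableOn (fun x : ℝ => Real.log x / (1 + x^2)) (Set.Icc 0 1) volume := by
  rw [integrableOn_Icc_iff_integrableOn_Ioc]
  have hmeas : AEStronglyMeasurable (fun x : ℝ => Real.log x / (1 + x^2))
      (volume.restrict (Set.Ioc (0:ℝ) 1)) :=
    (Real.measurable_log.div ((measurable_const.add (measurable_id.pow_const 2)))).aestronglyMeasurable
  refine Integrable.mono' (g := fun x => ‖Real.log x‖) integrableOn_log_Ioc.norm hmeas ?_
  filter_upwards with x
  rw [norm_div]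
  have h1 : (1:ℝ) ≤ ‖1 + x^2‖ := by
    rw [Real.norm_eq_abs, abs_of_pos (by positivity : (0:ℝ) < 1 + x^2)]
    nlinarith [sq_nonneg x]
  calc ‖Real.log x‖ / ‖1 + x^2‖ ≤ ‖Real.log x‖ / 1 :=
        div_le_div_of_nonneg_left (norm_nonneg _) one_pos h1 |>.trans_eq (by ring) |> fun h => h
    _ = ‖Real.log x‖ := div_one _

lemma integral_log_tan_eq :
    ∫ u in (0:ℝ)..(π/4), Real.log (Real.tan u)
      = ∫ x in (0:ℝ)..1, Real.log x / (1 + x^2) := by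
  have h0 : (0:ℝ) < π := pi_pos
  have hl : (𝓝[Set.Ioo (0:ℝ) 1] (0:ℝ)).NeBot := by
    rw [← mem_closure_iff_nhdsWithin_neBot, closure_Ioo one_ne_zero.symm]
    exact ⟨le_refl 0, zero_le_one⟩
  -- substitution identity for each ε ∈ (0,1)
  have hsub : ∀ ε ∈ Set.Ioo (0:ℝ) 1,
      ∫ x in ε..1, Real.log x / (1 + x^2)
        = ∫ u in Real.arctan ε..(π/4), Real.log (Real.tan u) := by
    intro ε hε
    have harc := intervalIntegral.integral_comp_smul_deriv' (a := ε) (b := 1)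
      (f := Real.arctan) (f' := fun x => 1/(1+x^2)) (g := fun u => Real.log (Real.tan u))
      (fun x _ => Real.hasDerivAt_arctan x)
      (Continuous.continuousOn (by fun_prop (disch := intro x; positivity)))
      ?_
    · rw [Real.arctan_one] at harc
      rw [← harc]
      refine intervalIntegral.integral_congr (fun x hx => ?_)
      simp only [Function.comp, smul_eq_mul]
      rw [Real.tan_arctan]
      ring
    · intro u hu
      obtain ⟨x, hx, rfl⟩ := hu
      rw [Set.uIcc_of_le hε.2.le] at hx
      have hx0 : 0 < x := lt_of_lt_of_le hε.1 hx.1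
      have h1 : 0 < Real.arctan x := by
        rw [← Real.arctan_zero]; exact Real.arctan_strictMono hx0
      have h2 : Real.arctan x < π/2 := Real.arctan_lt_pi_div_two x
      have hcos : Real.cos (Real.arctan x) ≠ 0 :=
        (Real.cos_pos_of_mem_Ioo ⟨by linarith, h2⟩).ne'
      have htan : Real.tan (Real.arctan x) ≠ 0 := by
        rw [Real.tan_arctan]; exact hx0.ne'
      exact ((Real.continuousAt_log htan).comp
        (Real.continuousAt_tan.mpr hcos)).continuousWithinAt
  -- LHS tendsto
  have hψ : Tendsto (fun ε => ∫ x in ε..1, Real.log x / (1 + x^2))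
      (𝓝[Set.Ioo (0:ℝ) 1] 0) (𝓝 (∫ x in (0:ℝ)..1, Real.log x / (1 + x^2))) := by
    have hcont := intervalIntegral.continuousOn_primitive_interval_left
      (f := fun x : ℝ => Real.log x / (1 + x^2)) (μ := volume) (a := 0) (b := 1) ?_
    · have := hcont 0 (by rw [Set.uIcc_of_le zero_le_one]; exact ⟨le_refl 0, zero_le_one⟩)
      rw [ContinuousWithinAt, Set.uIcc_of_le zero_le_one] at this
      exact this.mono_left (nhdsWithin_mono _ Set.Ioo_subset_Icc_self)
    · rw [Set.uIcc_of_le zero_le_one]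
      exact integrableOn_log_div_one_add_sq
  -- RHS tendsto
  have hq : (0:ℝ) ≤ π/4 := by linarith
  have hφ : Tendsto (fun ε => ∫ u in Real.arctan ε..(π/4), Real.log (Real.tan u))
      (𝓝[Set.Ioo (0:ℝ) 1] 0) (𝓝 (∫ u in (0:ℝ)..(π/4), Real.log (Real.tan u))) := by
    have hcont := intervalIntegral.continuousOn_primitive_interval_left
      (f := fun u : ℝ => Real.log (Real.tan u)) (μ := volume) (a := 0) (b := π/4) ?_
    · have h1 := hcont 0 (by rw [Set.uIcc_of_le hq]; exact ⟨le_refl 0, hq⟩)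
      rw [ContinuousWithinAt, Set.uIcc_of_le hq] at h1
      have harct : Tendsto Real.arctan (𝓝[Set.Ioo (0:ℝ) 1] 0)
          (𝓝[Set.Icc (0:ℝ) (π/4)] 0) := by
        apply tendsto_nhdsWithin_of_tendsto_nhds_of_eventually_within
        · have := (Real.continuous_arctan.tendsto 0).mono_left
            (nhdsWithin_le_nhds (s := Set.Ioo (0:ℝ) 1))
          rwa [Real.arctan_zero] at this
        · filter_upwards [self_mem_nhdsWithin] with ε hε
          refine ⟨?_, ?_⟩
          · rw [← Real.arctan_zero]
            exact (Real.arctan_strictMono hε.1).le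
          · rw [← Real.arctan_one]
            exact Real.arctan_strictMono.monotone hε.2.le
      exact h1.comp harct
    · rw [Set.uIcc_of_le hq, integrableOn_Icc_iff_integrableOn_Ioc,
        ← intervalIntegrable_iff_integrableOn_Ioc_of_le hq]
      exact ii_log_tan
  have heq : (fun ε => ∫ x in ε..1, Real.log x / (1 + x^2))
      =ᶠ[𝓝[Set.Ioo (0:ℝ) 1] 0]
      (fun ε => ∫ u in Real.arctan ε..(π/4), Real.log (Real.tan u)) := by
    filter_upwards [self_mem_nhdsWithin] with ε hε
    exact hsub ε hε
  exact (tendsto_nhds_unique (hψ.congr' heq) hφ).symm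

/-- GR 4.224.2 and 4.224.5: `∫_0^{π/4} ln(sin t) dt = -(π/4) ln 2 - G/2` and
`∫_0^{π/4} ln(cos t) dt = -(π/4) ln 2 + G/2`, where `G` is Catalan's constant. -/
theorem integral_log_sin_cos_pi_div_four :
    (∫ t in (0:ℝ)..(Real.pi / 4), Real.log (Real.sin t) =
      -(Real.pi / 4) * Real.log 2 - (∑' k : ℕ, (-1 : ℝ) ^ k / (2 * (k : ℝ) + 1) ^ 2) / 2) ∧
    (∫ t in (0:ℝ)..(Real.pi / 4), Real.log (Real.cos t) =
      -(Real.pi / 4) * Real.log 2 + (∑' k : ℕ, (-1 : ℝ) ^ k / (2 * (k : ℝ) + 1) ^ 2) / 2) := by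
  have h0 : (0:ℝ) < π := pi_pos
  have hiis : IntervalIntegrable (fun t => Real.log (Real.sin t)) volume 0 (π/4) :=
    intervalIntegrable_log_sin' (by linarith) (by linarith)
  have hsum := sum_IJ
  have hdiff : (∫ t in (0:ℝ)..(π/4), Real.log (Real.cos t))
      - (∫ t in (0:ℝ)..(π/4), Real.log (Real.sin t))
      = ∑' k : ℕ, (-1 : ℝ) ^ k / (2 * (k : ℝ) + 1) ^ 2 := by
    rw [← intervalIntegral.integral_sub ii_log_cos_quarter hiis]
    have hcongr : ∫ t in (0:ℝ)..(π/4),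
        (Real.log (Real.cos t) - Real.log (Real.sin t))
        = ∫ t in (0:ℝ)..(π/4), -Real.log (Real.tan t) := by
      refine intervalIntegral.integral_congr (fun u hu => ?_)
      rw [Set.uIcc_of_le (by linarith : (0:ℝ) ≤ π/4)] at hu
      rw [log_tan_eqOn u hu]
      ring
    rw [hcongr, intervalIntegral.integral_neg, integral_log_tan_eq,
      integral_log_div_one_add_sq, neg_neg]
  constructor
  · linarith
  · linarith
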